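/- Let φ be a continuous flow on ℝ². If φ has a nonstationary periodic point, i.e. a point p and a time T > 0 with φ^T(p) = p but φ^t(p) ≠ p for some t, then φ has a fixedpoint: there exists q ∈ ℝ² with φ^t(q) = q for all t ∈ ℝ. -/

import Mathlib

open Filter Topology Function Set

/-- A (continuous) flow on the plane ℝ². -/
def IsFlow (φ : ℝ → ℝ × ℝ → ℝ × ℝ) : Prop :=
  Continuous (uncurry φ) ∧ (∀ p, φ 0 p = p) ∧ ∀ s t p, φ s (φ t p) = φ (s + t) p

/-- The flow has no fixedpoint. -/
def FixedpointFree (φ : ℝ → ℝ × ℝ → ℝ × ℝ) : Prop :=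
  ∀ p : ℝ × ℝ, ∃ t : ℝ, φ t p ≠ p

/-- The orbit of a point under a flow. -/
def flowOrbit (φ : ℝ → ℝ × ℝ → ℝ × ℝ) (p : ℝ × ℝ) : Set (ℝ × ℝ) :=
  Set.range (fun t => φ t p)

/-- A C¹ flow: continuously differentiable with nowhere-vanishing velocity field. -/
def IsC1Flow (φ : ℝ → ℝ × ℝ → ℝ × ℝ) : Prop :=
  IsFlow φ ∧ ContDiff ℝ 1 (uncurry φ) ∧ ∀ p : ℝ × ℝ, deriv (fun t => φ t p) 0 ≠ 0

/-- The orbit foliation of φ is trivial: some self-homeomorphism of the plane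
takes every orbit to a horizontal line. -/
def TrivialFoliation (φ : ℝ → ℝ × ℝ → ℝ × ℝ) : Prop :=
  ∃ H : (ℝ × ℝ) ≃ₜ (ℝ × ℝ), ∀ p : ℝ × ℝ, ∃ c : ℝ,
    H '' flowOrbit φ p = {q : ℝ × ℝ | q.2 = c}

/-- Rigidity: a continuous function on an interval with values in `2πℤ`
takes the same value at the endpoints. -/
lemma int_valued_eq' (g : ℝ → ℝ) (a b : ℝ) (hab : a ≤ b)
    (hg : ContinuousOn g (Icc a b))
    (hint : ∀ x ∈ Icc a b, ∃ k : ℤ, g x = 2 * Real.pi * k) :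
    g a = g b := by
  by_contra hne
  obtain ⟨m, hm⟩ := hint a (left_mem_Icc.2 hab)
  obtain ⟨n, hn⟩ := hint b (right_mem_Icc.2 hab)
  have hpi := Real.pi_pos
  have hmn : m ≠ n := by
    rintro rfl; exact hne (hm.trans hn.symm)
  set y : ℝ := 2 * Real.pi * ((min m n : ℤ) : ℝ) + Real.pi with hy
  have hy_mem : y ∈ uIcc (g a) (g b) := by
    rw [mem_uIcc]
    rcases le_total m n with h | h
    · left
      have h1 : ((min m n : ℤ) : ℝ) = (m : ℝ) := by rw [min_eq_left h]
      have h2 : (m : ℝ) + 1 ≤ (n : ℝ) := by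
        exact_mod_cast Int.add_one_le_iff.2 (lt_of_le_of_ne h hmn)
      rw [hm, hn, hy, h1]
      constructor <;> nlinarith
    · right
      have h1 : ((min m n : ℤ) : ℝ) = (n : ℝ) := by rw [min_eq_right h]
      have h2 : (n : ℝ) + 1 ≤ (m : ℝ) := by
        exact_mod_cast Int.add_one_le_iff.2 (lt_of_le_of_ne h (Ne.symm hmn))
      rw [hm, hn, hy, h1]
      constructor <;> nlinarith
  have himg := intermediate_value_uIcc (hg.mono (by rw [uIcc_of_le hab])) hy_mem
  rw [uIcc_of_le hab] at himg
  obtain ⟨x, hx, hgx⟩ := himg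
  obtain ⟨k, hk⟩ := hint x hx
  rw [hk] at hgx
  have : Real.pi * (2 * (k : ℝ)) = Real.pi * (2 * ((min m n : ℤ) : ℝ) + 1) := by
    rw [hy] at hgx; ring_nf at hgx ⊢; linarith
  have h2 : (2 * (k : ℝ)) = 2 * ((min m n : ℤ) : ℝ) + 1 :=
    mul_left_cancel₀ (ne_of_gt hpi) this
  have : (2 * k : ℤ) = 2 * (min m n) + 1 := by exact_mod_cast h2
  omega

/-- Telescoping product of clamped ratios. -/
lemma teleB (F : ℝ → ℂ) (hF : ∀ x, F x ≠ 0) (c δ : ℝ) (hδ : 0 ≤ δ) (t : ℝ) :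
    ∀ n : ℕ, (∏ i ∈ Finset.range n,
      (F (max (c + i * δ) (min t (c + (i + 1) * δ))) / F (c + i * δ)))
      = F (max c (min t (c + n * δ))) / F c := by
  intro n
  induction n with
  | zero =>
      simp only [Finset.range_zero, Finset.prod_empty, Nat.cast_zero, zero_mul, add_zero]
      rw [max_eq_left (min_le_right t c)]
      exact (div_self (hF c)).symm
  | succ n ih =>
      rw [Finset.prod_range_succ, ih]
      push_cast
      have hpn : c ≤ c + (n : ℝ) * δ := le_add_of_nonneg_right (by positivity)
      have hstep : c + (n : ℝ) * δ ≤ c + ((n : ℝ) + 1) * δ := by nlinarith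
      rcases le_total t (c + (n : ℝ) * δ) with h | h
      · rw [min_eq_left (h.trans hstep), min_eq_left h, max_eq_left h, div_self (hF _), mul_one]
      · have h1 : max c (min t (c + (n : ℝ) * δ)) = c + (n : ℝ) * δ := by
          rw [min_eq_right h]; exact max_eq_right hpn
        have h2 : max (c + (n : ℝ) * δ) (min t (c + ((n : ℝ) + 1) * δ)) =
            min t (c + ((n : ℝ) + 1) * δ) := max_eq_right (le_min h hstep)
        have h3 : max c (min t (c + ((n : ℝ) + 1) * δ)) = min t (c + ((n : ℝ) + 1) * δ) :=
          max_eq_right (hpn.trans (le_min h hstep))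
        rw [h1, h2, h3]
        field_simp
        rw [mul_div_mul_left _ _ (hF _)]

set_option maxHeartbeats 1000000 in
/-- Existence of a continuous logarithm for a 2-parameter family, clamped in the
first variable, on a rectangle in the second variable, given a base lift. -/
lemma liftCore' (f : ℝ → ℝ → ℂ) (hf : Continuous fun x : ℝ × ℝ => f x.1 x.2)
    (h0 : ∀ s t, f s t ≠ 0) (a b c d : ℝ) (hab : a ≤ b) (hcd : c ≤ d)
    (hcls : ∀ s t, f s t = f (max a (min s b)) t)
    (θ₁ : ℝ → ℂ) (hθ₁ : Continuous θ₁) (hbase : ∀ s, Complex.exp (θ₁ s) = f s c) :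
    ∃ θ : ℝ → ℝ → ℂ, Continuous (fun x : ℝ × ℝ => θ x.1 x.2) ∧
      ∀ s : ℝ, ∀ t ∈ Icc c d, Complex.exp (θ s t) = f s t := by
  have hK : IsCompact (Icc a b ×ˢ Icc c d) := isCompact_Icc.prod isCompact_Icc
  have hKne : (Icc a b ×ˢ Icc c d).Nonempty :=
    ⟨(a, c), ⟨left_mem_Icc.2 hab, left_mem_Icc.2 hcd⟩⟩
  obtain ⟨x₀, hx₀, hminOn⟩ := hK.exists_isMinOn hKne (hf.norm.continuousOn)
  have hmin : ∀ y ∈ Icc a b ×ˢ Icc c d, ‖f x₀.1 x₀.2‖ ≤ ‖f y.1 y.2‖ :=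
    fun y hy => isMinOn_iff.1 hminOn y hy
  set m : ℝ := ‖f x₀.1 x₀.2‖ with hm
  have hm0 : 0 < m := norm_pos_iff.2 (h0 _ _)
  have hUC := hK.uniformContinuousOn_of_continuous hf.continuousOn
  rw [Metric.uniformContinuousOn_iff] at hUC
  obtain ⟨δ, hδ0, hδ⟩ := hUC m hm0
  obtain ⟨n, hn⟩ := exists_nat_gt ((d - c) / δ)
  have hn0 : 0 < (n : ℝ) := lt_of_le_of_lt (div_nonneg (sub_nonneg.2 hcd) hδ0.le) hn
  set ε : ℝ := (d - c) / n with hε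
  have hε0 : 0 ≤ ε := div_nonneg (sub_nonneg.2 hcd) hn0.le
  have hεδ : ε < δ := by
    rw [hε, div_lt_iff₀ hn0]
    calc d - c = (d - c) / δ * δ := by field_simp
    _ < n * δ := by exact mul_lt_mul_of_pos_right hn hδ0
    _ = δ * n := mul_comm _ _
  have hcnd : c + n * ε = d := by rw [hε]; field_simp; ring
  -- the key estimate
  have key : ∀ s : ℝ, ∀ t₁ t₂ : ℝ, t₁ ∈ Icc c d → t₂ ∈ Icc c d → dist t₁ t₂ < δ →
      ‖f s t₁ / f s t₂ - 1‖ < 1 := by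
    intro s t₁ t₂ h₁ h₂ hdist
    set s' : ℝ := max a (min s b) with hs'
    have hs'mem : s' ∈ Icc a b := ⟨le_max_left _ _, max_le hab (min_le_right _ _)⟩
    have hmem₁ : ((s', t₁) : ℝ × ℝ) ∈ Icc a b ×ˢ Icc c d := ⟨hs'mem, h₁⟩
    have hmem₂ : ((s', t₂) : ℝ × ℝ) ∈ Icc a b ×ˢ Icc c d := ⟨hs'mem, h₂⟩
    have hdd : dist ((s', t₁) : ℝ × ℝ) ((s', t₂) : ℝ × ℝ) < δ := by
      rw [Prod.dist_eq]
      simp only [dist_self]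
      rw [max_eq_right dist_nonneg]
      exact hdist
    have hval := hδ _ hmem₁ _ hmem₂ hdd
    rw [hcls s t₁, hcls s t₂, ← hs']
    rw [div_sub_one (h0 s' t₂), norm_div, div_lt_one (norm_pos_iff.2 (h0 s' t₂))]
    calc ‖f s' t₁ - f s' t₂‖ = dist (f s' t₁) (f s' t₂) := (dist_eq_norm _ _).symm
    _ < m := hval
    _ ≤ ‖f s' t₂‖ := hmin _ hmem₂
  -- points and clamps
  have hptmem : ∀ i : ℕ, i ≤ n → c + i * ε ∈ Icc c d := by
    intro i hi
    constructor
    · nlinarith [Nat.cast_nonneg (α := ℝ) i]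
    · have : (i : ℝ) ≤ n := Nat.cast_le.2 hi
      nlinarith
  have hmImem : ∀ (i : ℕ), i < n → ∀ t : ℝ,
      max (c + i * ε) (min t (c + (i + 1) * ε)) ∈ Icc c d ∧
      dist (max (c + i * ε) (min t (c + (i + 1) * ε))) (c + i * ε) < δ := by
    intro i hi t
    have h1 : c + (i : ℝ) * ε ∈ Icc c d := hptmem i hi.le
    have h2 : c + ((i : ℝ) + 1) * ε ∈ Icc c d := by
      have := hptmem (i + 1) hi
      push_cast at this ⊢
      exact this
    have hle : c + (i : ℝ) * ε ≤ c + ((i : ℝ) + 1) * ε := by nlinarith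
    have hlow : c + (i : ℝ) * ε ≤ max (c + i * ε) (min t (c + ((i : ℝ) + 1) * ε)) :=
      le_max_left _ _
    have hhigh : max (c + i * ε) (min t (c + ((i : ℝ) + 1) * ε)) ≤ c + ((i : ℝ) + 1) * ε :=
      max_le hle (min_le_right _ _)
    refine ⟨⟨h1.1.trans hlow, hhigh.trans h2.2⟩, ?_⟩
    rw [Real.dist_eq, abs_of_nonneg (by linarith)]
    have : c + ((i : ℝ) + 1) * ε - (c + (i : ℝ) * ε) = ε := by ring
    linarith
  -- the lift
  refine ⟨fun s t => θ₁ s + ∑ i ∈ Finset.range n,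
    Complex.log (f s (max (c + i * ε) (min t (c + (i + 1) * ε))) / f s (c + i * ε)), ?_, ?_⟩
  · apply Continuous.add (hθ₁.comp continuous_fst)
    apply continuous_finset_sum
    intro i hi
    rw [Finset.mem_range] at hi
    rw [continuous_iff_continuousAt]
    intro x
    have hmI : Continuous fun x : ℝ × ℝ => max (c + i * ε) (min x.2 (c + (i + 1) * ε)) :=
      continuous_const.max (continuous_snd.min continuous_const)
    have hz : ContinuousAt (fun x : ℝ × ℝ =>
        f x.1 (max (c + i * ε) (min x.2 (c + (i + 1) * ε))) / f x.1 (c + i * ε)) x := by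
      apply ContinuousAt.div
      · exact (hf.comp (continuous_fst.prodMk hmI)).continuousAt
      · exact (hf.comp (continuous_fst.prodMk continuous_const)).continuousAt
      · exact h0 _ _
    apply ContinuousAt.clog hz
    obtain ⟨hmem, hdist⟩ := hmImem i hi x.2
    have hb := key x.1 _ _ hmem (hptmem i hi.le) hdist
    have := Complex.mem_slitPlane_of_norm_lt_one (z :=
      f x.1 (max (c + i * ε) (min x.2 (c + (i + 1) * ε))) / f x.1 (c + i * ε) - 1) hb
    simpa using this
  · intro s t ht
    rw [Complex.exp_add, Complex.exp_sum]
    have hprod : ∀ i ∈ Finset.range n, Complex.exp (Complex.log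
        (f s (max (c + i * ε) (min t (c + (i + 1) * ε))) / f s (c + i * ε)))
        = f s (max (c + i * ε) (min t (c + (i + 1) * ε))) / f s (c + i * ε) := by
      intro i _
      exact Complex.exp_log (div_ne_zero (h0 _ _) (h0 _ _))
    rw [Finset.prod_congr rfl hprod, teleB (f s) (h0 s) c ε hε0 t n, hcnd,
      min_eq_left ht.2, max_eq_right ht.1, hbase]
    rw [← mul_div_assoc]
    exact mul_div_cancel_left₀ _ (h0 s c)

lemma lift1' (g : ℝ → ℂ) (hg : Continuous g) (h0 : ∀ t, g t ≠ 0) (c d : ℝ) (hcd : c ≤ d)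
    (hcl : ∀ t, g t = g (max c (min t d))) :
    ∃ θ : ℝ → ℂ, Continuous θ ∧ ∀ t, Complex.exp (θ t) = g t := by
  obtain ⟨θ, hθc, hθ⟩ := liftCore' (fun _ t => g t) (hg.comp continuous_snd)
    (fun _ t => h0 t) 0 1 c d zero_le_one hcd (fun _ _ => rfl)
    (fun _ => Complex.log (g c)) continuous_const (fun _ => Complex.exp_log (h0 c))
  refine ⟨fun t => θ 0 (max c (min t d)), ?_, ?_⟩
  · exact hθc.comp (continuous_const.prodMk
      (continuous_const.max (continuous_id.min continuous_const)))
  · intro t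
    rw [hθ 0 _ ⟨le_max_left _ _, max_le hcd (min_le_right _ _)⟩]
    exact (hcl t).symm

set_option maxHeartbeats 1000000 in
/-- Poincaré–Bendixson consequence: a continuous flow on ℝ²
with a nonstationary periodic point has a fixedpoint. -/
theorem periodic_orbit_forces_fixedpoint
    (φ : ℝ → ℝ × ℝ → ℝ × ℝ) (hφ : IsFlow φ)
    (p : ℝ × ℝ) (T : ℝ) (hT : 0 < T) (hper : φ T p = p)
    (hns : ∃ t : ℝ, φ t p ≠ p) :
    ∃ q : ℝ × ℝ, ∀ t : ℝ, φ t q = q := by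
  obtain ⟨hc, hid, hgrp⟩ := hφ
  by_contra hfix
  push_neg at hfix
  have hγc : Continuous fun t : ℝ => φ t p :=
    hc.comp (continuous_id.prodMk continuous_const)
  -- stabilizer subgroups
  have hstab : ∀ x : ℝ × ℝ, ∃ S : AddSubgroup ℝ, (S : Set ℝ) = {t | φ t x = x} := by
    intro x
    refine ⟨{ carrier := {t | φ t x = x},
              zero_mem' := hid x,
              add_mem' := ?_,
              neg_mem' := ?_ }, rfl⟩
    · intro s t hs ht
      simp only [Set.mem_setOf_eq] at *
      rw [← hgrp s t x, ht, hs]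
    · intro t ht
      simp only [Set.mem_setOf_eq] at *
      calc φ (-t) x = φ (-t) (φ t x) := by rw [ht]
      _ = φ (-t + t) x := hgrp _ _ _
      _ = x := by rw [neg_add_cancel]; exact hid x
  have hiter : ∀ (x : ℝ × ℝ) (s : ℝ), φ s x = x → ∀ k : ℤ, φ (k * s) x = x := by
    intro x s hs k
    obtain ⟨S, hS⟩ := hstab x
    have h1 : s ∈ S := by rw [← SetLike.mem_coe, hS]; exact hs
    have h2 : k • s ∈ S := S.zsmul_mem h1 k
    have h3 : (k : ℝ) * s ∈ (S : Set ℝ) := by rwa [← zsmul_eq_mul, SetLike.mem_coe]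
    rw [hS] at h3
    exact h3
  -- minimal period
  obtain ⟨Sp, hSp⟩ := hstab p
  have hSpc : IsClosed ((Sp : Set ℝ)) := by
    rw [hSp]; exact isClosed_eq hγc continuous_const
  rcases Sp.dense_or_cyclic with hd | ⟨g, hg⟩
  · obtain ⟨t₁, ht₁⟩ := hns
    have huniv : (Sp : Set ℝ) = Set.univ := hSpc.closure_eq.symm.trans hd.closure_eq
    have h2 : t₁ ∈ {t | φ t p = p} := by rw [← hSp, huniv]; trivial
    exact ht₁ h2
  have hTmem : T ∈ (Sp : Set ℝ) := by rw [hSp]; exact hper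
  have hmem : ∀ s : ℝ, φ s p = p ↔ ∃ k : ℤ, k • g = s := by
    intro s
    have h1 : s ∈ (Sp : Set ℝ) ↔ φ s p = p := by rw [hSp]; rfl
    rw [← h1, SetLike.mem_coe, hg, AddSubgroup.mem_closure_singleton]
  have hg0 : g ≠ 0 := by
    rintro rfl
    obtain ⟨k, hk⟩ := (hmem T).1 hper
    rw [smul_zero] at hk
    exact absurd hk.symm (ne_of_gt hT)
  set T' : ℝ := |g| with hT'def
  have hT'pos : 0 < T' := abs_pos.2 hg0
  have hT'mem : φ T' p = p := by
    rcases abs_choice g with h | h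
    · exact (hmem T').2 ⟨1, by rw [one_smul, hT'def, h]⟩
    · exact (hmem T').2 ⟨-1, by rw [neg_smul, one_smul, hT'def, h]⟩
  have hminp : ∀ s, 0 < s → s < T' → φ s p ≠ p := by
    intro s h1 h2 hs
    obtain ⟨k, hk⟩ := (hmem s).1 hs
    have hk0 : k ≠ 0 := by
      rintro rfl; rw [zero_smul] at hk; exact absurd hk.symm (ne_of_gt h1)
    have : T' ≤ |s| := by
      rw [← hk, zsmul_eq_mul, abs_mul, hT'def]
      have h3 : (1 : ℝ) ≤ |(k : ℝ)| := by
        rw [← Int.cast_abs]; exact_mod_cast Int.one_le_abs hk0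
      nlinarith [abs_nonneg g]
    rw [abs_of_pos h1] at this
    linarith
  have hshift : ∀ u t : ℝ, φ (t + u) p = φ t (φ u p) := fun u t => (hgrp t u p).symm
  have hperT' : ∀ t, φ (t + T') p = φ t p := fun t => by rw [hshift T' t, hT'mem]
  have hperZ : ∀ (k : ℤ) (t : ℝ), φ (t + k * T') p = φ t p := fun k t => by
    rw [hshift, hiter p T' hT'mem k]
  have hsec : ∀ s, 0 < s → s < T' → ∀ t, φ (t + s) p ≠ φ t p := by
    intro s h1 h2 t heq
    apply hminp s h1 h2
    have h3 : φ (-t) (φ (t + s) p) = φ (-t) (φ t p) := by rw [heq]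
    rw [hgrp, hgrp] at h3
    have e1 : -t + (t + s) = s := by ring
    have e2 : -t + t = 0 := by ring
    rw [e1, e2, hid] at h3
    exact h3
  -- uniform bound on the orbit
  obtain ⟨tM, -, hM⟩ := isCompact_Icc.exists_isMaxOn (nonempty_Icc.2 hT'pos.le)
    (hγc.norm.continuousOn)
  set M : ℝ := ‖φ tM p‖ with hMdef
  have hMb : ∀ t : ℝ, ‖φ t p‖ ≤ M := by
    intro t
    have hfl1 : 0 ≤ t - ⌊t / T'⌋ * T' := Int.sub_floor_div_mul_nonneg t hT'pos
    have hfl2 : t - ⌊t / T'⌋ * T' < T' := Int.sub_floor_div_mul_lt t hT'pos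
    have h4 : φ (t - ⌊t / T'⌋ * T' + ⌊t / T'⌋ * T') p = φ (t - ⌊t / T'⌋ * T') p := hperZ _ _
    rw [sub_add_cancel] at h4
    rw [h4]
    exact isMaxOn_iff.1 hM _ ⟨hfl1, hfl2.le⟩
  have hpM : ‖p‖ ≤ M := by have := hMb 0; rwa [hid] at this
  set R : ℝ := 3 * M + 1 with hRdef
  -- no small periods in the big ball
  have hδclaim : ∃ δ > 0, ∀ s : ℝ, 0 < s → s < δ →
      ∀ x ∈ Metric.closedBall (0 : ℝ × ℝ) R, φ s x ≠ x := by
    by_contra hcon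
    push_neg at hcon
    have hseq : ∀ n : ℕ, ∃ s : ℝ, (0 < s ∧ s < 1 / ((n : ℝ) + 1)) ∧
        ∃ x ∈ Metric.closedBall (0 : ℝ × ℝ) R, φ s x = x := by
      intro n
      obtain ⟨s, h1, h2, hx⟩ := hcon (1 / ((n : ℝ) + 1)) (by positivity)
      exact ⟨s, ⟨h1, h2⟩, hx⟩
    choose s hs x hxB hxfix using hseq
    obtain ⟨q, hqB, mseq, hmono, hlim⟩ :=
      (isCompact_closedBall (0 : ℝ × ℝ) R).tendsto_subseq hxB
    obtain ⟨t₀, ht₀⟩ := hfix q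
    apply ht₀
    set r : ℕ → ℝ := fun n => t₀ - ⌊t₀ / s (mseq n)⌋ * s (mseq n) with hrdef
    have hr0 : ∀ n : ℕ, φ (r n) (x (mseq n)) = φ t₀ (x (mseq n)) := by
      intro n
      have h1 : φ (⌊t₀ / s (mseq n)⌋ * s (mseq n)) (x (mseq n)) = x (mseq n) :=
        hiter _ _ (hxfix (mseq n)) _
      calc φ (r n) (x (mseq n))
          = φ (r n) (φ (⌊t₀ / s (mseq n)⌋ * s (mseq n)) (x (mseq n))) := by rw [h1]
        _ = φ (r n + ⌊t₀ / s (mseq n)⌋ * s (mseq n)) (x (mseq n)) := hgrp _ _ _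
        _ = φ t₀ (x (mseq n)) := by rw [hrdef]; ring_nf
    have hslim : Tendsto (fun n => s (mseq n)) atTop (nhds 0) := by
      apply squeeze_zero (fun n => (hs (mseq n)).1.le) (g := fun n : ℕ => 1 / ((n : ℝ) + 1))
      · intro n
        have h1 : s (mseq n) < 1 / ((mseq n : ℝ) + 1) := (hs (mseq n)).2
        have h0 : n ≤ mseq n := hmono.le_apply
        have h2 : ((n : ℝ) + 1) ≤ ((mseq n : ℝ) + 1) := by
          have := (Nat.cast_le (α := ℝ)).2 h0; linarith
        have h3 : 1 / ((mseq n : ℝ) + 1) ≤ 1 / ((n : ℝ) + 1) :=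
          one_div_le_one_div_of_le (by positivity) h2
        linarith
      · exact tendsto_one_div_add_atTop_nhds_zero_nat
    have hrlim : Tendsto r atTop (nhds 0) := by
      apply squeeze_zero
        (fun n => Int.sub_floor_div_mul_nonneg t₀ (hs (mseq n)).1)
        (fun n => (Int.sub_floor_div_mul_lt t₀ (hs (mseq n)).1).le)
      exact hslim
    have hL1 : Tendsto (fun n => φ t₀ (x (mseq n))) atTop (nhds (φ t₀ q)) := by
      have hcont : Continuous fun y : ℝ × ℝ => φ t₀ y :=
        hc.comp (continuous_const.prodMk continuous_id)
      exact (hcont.tendsto q).comp hlim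
    have hL2 : Tendsto (fun n => φ (r n) (x (mseq n))) atTop (nhds q) := by
      have h1 : Tendsto (fun n => ((r n, x (mseq n)) : ℝ × ℝ × ℝ)) atTop
          (nhds ((0 : ℝ), q)) := hrlim.prodMk_nhds hlim
      have h2 := (hc.tendsto ((0 : ℝ), q)).comp h1
      simp only [uncurry] at h2
      rw [hid q] at h2
      exact h2
    have hL2' : Tendsto (fun n => φ t₀ (x (mseq n))) atTop (nhds q) :=
      hL2.congr hr0
    exact tendsto_nhds_unique hL1 hL2'
  -- the winding number argument
  obtain ⟨δ, hδ0, hδB⟩ := hδclaim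
  set s₀ : ℝ := min δ T' / 2 with hs₀def
  have hminpos : 0 < min δ T' := lt_min hδ0 hT'pos
  have hs₀pos : 0 < s₀ := half_pos hminpos
  have hs₀δ : s₀ < δ := lt_of_lt_of_le (half_lt_self hminpos) (min_le_left _ _)
  have hs₀T' : s₀ < T' := lt_of_lt_of_le (half_lt_self hminpos) (min_le_right _ _)
  -- the complex identification
  set E : ℝ × ℝ → ℂ := fun x => Complex.equivRealProdCLM.symm x with hEdef
  have hEc : Continuous E := Complex.equivRealProdCLM.symm.continuous
  have hE0 : ∀ x : ℝ × ℝ, E x = 0 ↔ x = 0 := fun x =>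
    Complex.equivRealProdCLM.symm.map_eq_zero_iff
  have hEneg : ∀ x : ℝ × ℝ, E (-x) = - E x := fun x => map_neg _ x
  -- clamping facts
  have hc01a : ∀ u : ℝ, 0 ≤ max 0 (min u 1) := fun u => le_max_left _ _
  have hc01b : ∀ u : ℝ, max 0 (min u 1) ≤ 1 :=
    fun u => max_le zero_le_one (min_le_right _ _)
  have hc01i : ∀ u : ℝ, max 0 (min (max 0 (min u 1)) 1) = max 0 (min u 1) := by
    intro u
    rw [min_eq_left (hc01b u), max_eq_right (hc01a u)]
  have hc010 : max (0:ℝ) (min 0 1) = 0 := by norm_num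
  have hc011 : max (0:ℝ) (min 1 1) = 1 := by norm_num
  have hc01c : Continuous fun u : ℝ => max 0 (min u 1) :=
    continuous_const.max (continuous_id.min continuous_const)
  -- the family of loops
  set sv : ℝ → ℝ := fun v => s₀ + max 0 (min v 1) * (T' / 2 - s₀) with hsvdef
  have hsvc : Continuous sv := continuous_const.add (hc01c.mul continuous_const)
  have hsvmem : ∀ v, 0 < sv v ∧ sv v < T' := by
    intro v
    have h1 : (0:ℝ) ≤ max 0 (min v 1) := hc01a v
    have h2 : max 0 (min v 1) ≤ 1 := hc01b v
    simp only [hsvdef]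
    constructor <;> rcases le_total s₀ (T' / 2) with h | h
    · nlinarith [mul_nonneg h1 (sub_nonneg.2 h)]
    · nlinarith [mul_nonneg (sub_nonneg.2 h2) (sub_nonneg.2 h)]
    · nlinarith [mul_nonneg (sub_nonneg.2 h2) (sub_nonneg.2 h)]
    · nlinarith [mul_nonneg h1 (sub_nonneg.2 h)]
  have hsvcl : ∀ v, sv (max 0 (min v 1)) = sv v := by
    intro v; simp only [hsvdef]; rw [hc01i v]
  have hsv0 : sv 0 = s₀ := by simp only [hsvdef, hc010]; ring
  have hsv1 : sv 1 = T' / 2 := by simp only [hsvdef, hc011]; ring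
  set A : ℝ → ℝ → ℂ := fun v t => E (φ (t + sv v) p - φ t p) with hAdef
  have hAc : Continuous fun x : ℝ × ℝ => A x.1 x.2 := by
    apply hEc.comp
    apply Continuous.sub
    · exact hc.comp ((continuous_snd.add (hsvc.comp continuous_fst)).prodMk
        continuous_const)
    · exact hc.comp (continuous_snd.prodMk continuous_const)
  have hA0 : ∀ v t, A v t ≠ 0 := by
    intro v t h
    simp only [hAdef] at h
    rw [hE0, sub_eq_zero] at h
    exact hsec (sv v) (hsvmem v).1 (hsvmem v).2 t h
  have hAcl : ∀ v t, A v t = A (max 0 (min v 1)) t := by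
    intro v t; simp only [hAdef]; rw [hsvcl]
  -- loop periodicity
  have hAper : ∀ v, A v T' = A v 0 := by
    intro v
    simp only [hAdef]
    have e1 : T' + sv v = sv v + T' := add_comm _ _
    rw [e1, hperT' (sv v), hT'mem, zero_add, hid]
  -- lift of A
  obtain ⟨θA1, hθA1c, hθA1⟩ := lift1' (fun v => A v 0)
    (hAc.comp (continuous_id.prodMk continuous_const)) (fun v => hA0 v 0)
    0 1 zero_le_one (fun v => hAcl v 0)
  obtain ⟨θ, hθc, hθ⟩ := liftCore' A hAc hA0 0 1 0 T' zero_le_one hT'pos.le hAcl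
    θA1 hθA1c hθA1
  -- the contraction homotopy
  set pt : ℝ → ℝ → ℝ × ℝ := fun u t => p + max 0 (min u 1) • (φ t p - p) with hptdef
  have hptc : Continuous (fun x : ℝ × ℝ => pt x.1 x.2) := by
    apply continuous_const.add
    exact ((hc01c.comp continuous_fst).smul
      ((hc.comp (continuous_snd.prodMk continuous_const)).sub continuous_const))
  have hptB : ∀ u t, pt u t ∈ Metric.closedBall (0 : ℝ × ℝ) R := by
    intro u t
    rw [Metric.mem_closedBall, dist_zero_right]
    have h1 : ‖pt u t‖ ≤ ‖p‖ + ‖max 0 (min u 1) • (φ t p - p)‖ := norm_add_le _ _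
    have h2 : ‖max 0 (min u 1) • (φ t p - p)‖ ≤ 1 * (‖φ t p‖ + ‖p‖) := by
      rw [norm_smul, Real.norm_eq_abs, abs_of_nonneg (hc01a u)]
      have := norm_sub_le (φ t p) p
      nlinarith [hc01b u, hc01a u, norm_nonneg (φ t p - p), norm_nonneg (φ t p),
        norm_nonneg p]
    have h3 := hMb t
    rw [hRdef]
    linarith
  have hpt1 : ∀ t, pt 1 t = φ t p := by
    intro t; simp only [hptdef, hc011, one_smul]; abel
  have hpt0 : ∀ t, pt 0 t = p := by
    intro t; simp only [hptdef, hc010, zero_smul, add_zero]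
  set Bm : ℝ → ℝ → ℂ := fun u t => E (φ s₀ (pt u t) - pt u t) with hBmdef
  have hBmc : Continuous fun x : ℝ × ℝ => Bm x.1 x.2 := by
    apply hEc.comp
    exact (hc.comp (continuous_const.prodMk hptc)).sub hptc
  have hBm0 : ∀ u t, Bm u t ≠ 0 := by
    intro u t h
    simp only [hBmdef] at h
    rw [hE0, sub_eq_zero] at h
    exact hδB s₀ hs₀pos hs₀δ _ (hptB u t) h
  have hBmcl : ∀ u t, Bm u t = Bm (max 0 (min u 1)) t := by
    intro u t
    simp only [hBmdef, hptdef]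
    rw [hc01i]
  obtain ⟨θB1, hθB1c, hθB1⟩ := lift1' (fun u => Bm u 0)
    (hBmc.comp (continuous_id.prodMk continuous_const)) (fun u => hBm0 u 0)
    0 1 zero_le_one (fun u => hBmcl u 0)
  obtain ⟨θ', hθ'c, hθ'⟩ := liftCore' Bm hBmc hBm0 0 1 0 T' zero_le_one hT'pos.le hBmcl
    θB1 hθB1c hθB1
  -- membership shortcuts
  have mem0 : (0:ℝ) ∈ Icc (0:ℝ) T' := left_mem_Icc.2 hT'pos.le
  have memT' : T' ∈ Icc (0:ℝ) T' := right_mem_Icc.2 hT'pos.le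
  have hpi := Real.pi_pos
  -- imaginary part extraction
  have him : ∀ z w : ℂ, ∀ k : ℤ, z = w + k * (2 * Real.pi * Complex.I) →
      (z - w).im = 2 * Real.pi * k := by
    intro z w k hk
    rw [hk]
    simp [Complex.add_im, Complex.mul_im, Complex.mul_re, Complex.I_im, Complex.I_re]
    ring
  -- windings
  set wA : ℝ → ℝ := fun v => (θ v T' - θ v 0).im with hwAdef
  set wB : ℝ → ℝ := fun v => (θ' v T' - θ' v 0).im with hwBdef
  have hwAint : ∀ v : ℝ, ∃ k : ℤ, wA v = 2 * Real.pi * k := by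
    intro v
    have h1 : Complex.exp (θ v T') = Complex.exp (θ v 0) := by
      rw [hθ v T' memT', hθ v 0 mem0, hAper]
    obtain ⟨k, hk⟩ := Complex.exp_eq_exp_iff_exists_int.1 h1
    exact ⟨k, him _ _ k hk⟩
  have hwBint : ∀ v : ℝ, ∃ k : ℤ, wB v = 2 * Real.pi * k := by
    intro v
    have hBper : Bm v T' = Bm v 0 := by
      simp only [hBmdef, hptdef]
      have e1 : φ T' p = φ 0 p := by rw [hT'mem, hid]
      rw [e1]
    have h1 : Complex.exp (θ' v T') = Complex.exp (θ' v 0) := by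
      rw [hθ' v T' memT', hθ' v 0 mem0, hBper]
    obtain ⟨k, hk⟩ := Complex.exp_eq_exp_iff_exists_int.1 h1
    exact ⟨k, him _ _ k hk⟩
  have hwAc : Continuous wA := by
    apply Complex.continuous_im.comp
    exact (hθc.comp (continuous_id.prodMk continuous_const)).sub
      (hθc.comp (continuous_id.prodMk continuous_const))
  have hwBc : Continuous wB := by
    apply Complex.continuous_im.comp
    exact (hθ'c.comp (continuous_id.prodMk continuous_const)).sub
      (hθ'c.comp (continuous_id.prodMk continuous_const))
  -- step 1 : wB 0 = 0
  have hwB0 : wB 0 = 0 := by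
    have hconst : ∀ t ∈ Icc (0:ℝ) T', Complex.exp (θ' 0 t) = Complex.exp (θ' 0 0) := by
      intro t ht
      rw [hθ' 0 t ht, hθ' 0 0 mem0]
      simp only [hBmdef, hpt0]
    have hval : ∀ t ∈ Icc (0:ℝ) T', ∃ k : ℤ,
        (fun t => (θ' 0 t - θ' 0 0).im) t = 2 * Real.pi * k := by
      intro t ht
      obtain ⟨k, hk⟩ := Complex.exp_eq_exp_iff_exists_int.1 (hconst t ht)
      exact ⟨k, him _ _ k hk⟩
    have hcont : ContinuousOn (fun t => (θ' 0 t - θ' 0 0).im) (Icc 0 T') := by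
      apply Continuous.continuousOn
      exact Complex.continuous_im.comp
        ((hθ'c.comp (continuous_const.prodMk continuous_id)).sub continuous_const)
    have h1 := int_valued_eq' _ 0 T' hT'pos.le hcont hval
    simp only [sub_self, Complex.zero_im] at h1
    simp only [hwBdef]
    exact h1.symm
  -- step 2 : wB 0 = wB 1
  have hwB01 : wB 0 = wB 1 :=
    int_valued_eq' wB 0 1 zero_le_one hwBc.continuousOn (fun v _ => hwBint v)
  -- step 3 : wA 0 = wB 1
  have hABeq : ∀ t : ℝ, A 0 t = Bm 1 t := by
    intro t
    simp only [hAdef, hBmdef, hpt1, hsv0]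
    rw [hgrp s₀ t p, add_comm s₀ t]
  have hwA0B1 : wA 0 = wB 1 := by
    have hval : ∀ t ∈ Icc (0:ℝ) T', ∃ k : ℤ,
        (fun t => (θ 0 t - θ' 1 t).im) t = 2 * Real.pi * k := by
      intro t ht
      have h1 : Complex.exp (θ 0 t) = Complex.exp (θ' 1 t) := by
        rw [hθ 0 t ht, hθ' 1 t ht, hABeq]
      obtain ⟨k, hk⟩ := Complex.exp_eq_exp_iff_exists_int.1 h1
      exact ⟨k, him _ _ k hk⟩
    have hcont : ContinuousOn (fun t => (θ 0 t - θ' 1 t).im) (Icc 0 T') := by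
      apply Continuous.continuousOn
      exact Complex.continuous_im.comp
        ((hθc.comp (continuous_const.prodMk continuous_id)).sub
         (hθ'c.comp (continuous_const.prodMk continuous_id)))
    have h1 := int_valued_eq' _ 0 T' hT'pos.le hcont hval
    simp only [Complex.sub_im, hwAdef, hwBdef] at h1 ⊢
    linarith
  -- step 4 : wA 0 = wA 1
  have hwA01 : wA 0 = wA 1 :=
    int_valued_eq' wA 0 1 zero_le_one hwAc.continuousOn (fun v _ => hwAint v)
  have hwA1 : wA 1 = 0 := by rw [← hwA01, hwA0B1, ← hwB01, hwB0]
  -- step 5 : the antipodal symmetry forces wA 1 to be odd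
  have memhalf : T' / 2 ∈ Icc (0:ℝ) T' := ⟨(half_pos hT'pos).le, half_le_self hT'pos.le⟩
  have hanti : ∀ t ∈ Icc (0:ℝ) (T'/2),
      Complex.exp (θ 1 (t + T'/2)) = Complex.exp (θ 1 t + Real.pi * Complex.I) := by
    intro t ht
    have htm : t + T'/2 ∈ Icc (0:ℝ) T' :=
      ⟨by linarith [ht.1, (half_pos hT'pos).le], by linarith [ht.2]⟩
    have htm' : t ∈ Icc (0:ℝ) T' := ⟨ht.1, le_trans ht.2 (half_le_self hT'pos.le)⟩
    rw [hθ 1 _ htm, Complex.exp_add, Complex.exp_pi_mul_I, hθ 1 t htm']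
    simp only [hAdef, hsv1]
    have e1 : t + T'/2 + T'/2 = t + T' := by ring
    rw [e1, hperT' t, mul_neg_one]
    rw [← neg_sub (φ (t + T'/2) p) (φ t p), hEneg]
  have hval5 : ∀ t ∈ Icc (0:ℝ) (T'/2), ∃ k : ℤ,
      (fun t => (θ 1 (t + T'/2) - θ 1 t).im - Real.pi) t = 2 * Real.pi * k := by
    intro t ht
    obtain ⟨k, hk⟩ := Complex.exp_eq_exp_iff_exists_int.1 (hanti t ht)
    refine ⟨k, ?_⟩
    have h2 : (θ 1 (t + T'/2) - (θ 1 t + Real.pi * Complex.I)).im = 2 * Real.pi * k :=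
      him _ _ k hk
    simp only [Complex.sub_im, Complex.add_im, Complex.mul_im, Complex.I_im,
      Complex.I_re, Complex.ofReal_re, Complex.ofReal_im] at h2 ⊢
    linarith
  have hcont5 : ContinuousOn (fun t => (θ 1 (t + T'/2) - θ 1 t).im - Real.pi)
      (Icc 0 (T'/2)) := by
    apply Continuous.continuousOn
    apply Continuous.sub _ continuous_const
    apply Complex.continuous_im.comp
    exact (hθc.comp (continuous_const.prodMk (continuous_id.add continuous_const))).sub
      (hθc.comp (continuous_const.prodMk continuous_id))
  have h5 := int_valued_eq' _ 0 (T'/2) (half_pos hT'pos).le hcont5 hval5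
  obtain ⟨k0, hk0⟩ := hval5 0 (left_mem_Icc.2 (half_pos hT'pos).le)
  -- assemble the contradiction
  simp only [zero_add] at h5 hk0
  have e2 : T'/2 + T'/2 = T' := by ring
  rw [e2] at h5
  have hsum : (θ 1 (T'/2) - θ 1 0).im + (θ 1 T' - θ 1 (T'/2)).im = 0 := by
    have : wA 1 = (θ 1 T' - θ 1 0).im := rfl
    simp only [Complex.sub_im] at this ⊢
    rw [this] at hwA1
    linarith [hwA1]
  have halpha : (θ 1 (T'/2) - θ 1 0).im = 0 := by
    simp only [Complex.sub_im] at h5 hsum ⊢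
    linarith
  rw [halpha] at hk0
  have : (2 * (k0:ℝ) + 1) * Real.pi = 0 := by linarith
  rcases mul_eq_zero.1 this with h | h
  · have : (2 * k0 + 1 : ℤ) = 0 := by exact_mod_cast h
    omega
  · exact absurd h (ne_of_gt hpi)
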